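/- Suppose for each group i = 1, ..., a we have i.i.d. real random variables X_{i1}, X_{i2}, ... with normalized distribution function F_i, the groups being independent, and sample sizes n_i → ∞. Then the plug-in estimator p̂_i = ∫ Ĝ dF̂_i, where F̂_i is the empirical normalized distribution function of the first n_i observations in group i and Ĝ = (1/a)∑_ℓ F̂_ℓ, converges in probability to p_i = ∫ G dF_i = (1/a)∑_ℓ w_{ℓi}, as min_i n_i → ∞. -/

import Mathlib

open MeasureTheory ProbabilityTheory Filter

/-- The count function `c(u) = 1{u>0} + (1/2)·1{u=0}`. -/
noncomputable def c (u : ℝ) : ℝ := if 0 < u then 1 else if u = 0 then 1/2 else 0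


lemma c_nonneg (u : ℝ) : 0 ≤ c u := by unfold c; split_ifs <;> norm_num

lemma c_le_one (u : ℝ) : c u ≤ 1 := by unfold c; split_ifs <;> norm_num

lemma c_add (u : ℝ) : c u + c (-u) = 1 := by
  unfold c
  rcases lt_trichotomy 0 u with h | h | h
  · rw [if_pos h, if_neg (by linarith), if_neg (by linarith)]; norm_num
  · rw [if_neg (by linarith), if_pos h.symm, if_neg (by linarith), if_pos (by linarith)]; norm_num
  · rw [if_neg (by linarith), if_neg (by linarith), if_pos (by linarith)]; norm_num

lemma measurable_c : Measurable c := by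
  unfold c
  refine Measurable.ite (measurableSet_lt measurable_const measurable_id) measurable_const ?_
  exact Measurable.ite (measurableSet_eq_fun measurable_id measurable_const)
    measurable_const measurable_const

lemma integrable_of_bdd {Ω : Type*} [MeasureSpace Ω] [IsProbabilityMeasure (ℙ : Measure Ω)]
    {f : Ω → ℝ} (hf : Measurable f) {C : ℝ} (h : ∀ ω, |f ω| ≤ C) : Integrable f ℙ :=
  (integrable_const C).mono' hf.aestronglyMeasurable
    (ae_of_all _ (by simpa [Real.norm_eq_abs] using h))

lemma diag_sum (f : ℕ → ℝ) (nn : ℕ) :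
    ∑ k ∈ Finset.range nn, ∑ r ∈ Finset.range nn, c (f k - f r) = (nn : ℝ)^2 / 2 := by
  have hswap : ∑ k ∈ Finset.range nn, ∑ r ∈ Finset.range nn, c (f k - f r)
      = ∑ k ∈ Finset.range nn, ∑ r ∈ Finset.range nn, c (f r - f k) := Finset.sum_comm
  have key : (∑ k ∈ Finset.range nn, ∑ r ∈ Finset.range nn, c (f k - f r))
      + (∑ k ∈ Finset.range nn, ∑ r ∈ Finset.range nn, c (f k - f r)) = (nn : ℝ)^2 := by
    nth_rewrite 2 [hswap]
    rw [← Finset.sum_add_distrib]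
    have : ∀ k ∈ Finset.range nn,
        (∑ r ∈ Finset.range nn, c (f k - f r)) + (∑ r ∈ Finset.range nn, c (f r - f k))
        = ∑ r ∈ Finset.range nn, (1:ℝ) := by
      intro k _
      rw [← Finset.sum_add_distrib]
      refine Finset.sum_congr rfl fun r _ => ?_
      rw [show f r - f k = -(f k - f r) by ring]
      exact c_add _
    rw [Finset.sum_congr rfl this]
    simp [sq]
  linarith

lemma integral_c {Ω : Type*} [MeasureSpace Ω] [IsProbabilityMeasure (ℙ : Measure Ω)]
    {Y Z : Ω → ℝ} (hY : Measurable Y) (hZ : Measurable Z) :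
    ∫ ω, c (Y ω - Z ω) = (ℙ {ω | Z ω < Y ω}).toReal + (1/2) * (ℙ {ω | Z ω = Y ω}).toReal := by
  have hs1 : MeasurableSet {ω | Z ω < Y ω} := measurableSet_lt hZ hY
  have hs2 : MeasurableSet {ω | Z ω = Y ω} := measurableSet_eq_fun hZ hY
  have heq : (fun ω => c (Y ω - Z ω)) = fun ω =>
      Set.indicator {ω | Z ω < Y ω} (fun _ => (1:ℝ)) ω
      + (1/2) * Set.indicator {ω | Z ω = Y ω} (fun _ => (1:ℝ)) ω := by
    funext ω
    simp only [Set.indicator_apply, Set.mem_setOf_eq, c]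
    rcases lt_trichotomy (Z ω) (Y ω) with h | h | h
    · rw [if_pos (by linarith : (0:ℝ) < Y ω - Z ω), if_pos h, if_neg (by linarith : ¬ Z ω = Y ω)]
      ring
    · rw [if_neg (by linarith : ¬ (0:ℝ) < Y ω - Z ω), if_pos (by linarith : Y ω - Z ω = 0),
        if_neg (by linarith : ¬ Z ω < Y ω), if_pos h]
      ring
    · rw [if_neg (by linarith : ¬ (0:ℝ) < Y ω - Z ω), if_neg (by intro hc; linarith),
        if_neg (by linarith : ¬ Z ω < Y ω), if_neg (by intro hc; exact absurd hc (by linarith))]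
      ring
  have i1 : Integrable ({ω | Z ω < Y ω}.indicator (fun _ => (1:ℝ))) ℙ :=
    (integrable_const (1:ℝ)).indicator hs1
  have i2 : Integrable ({ω | Z ω = Y ω}.indicator (fun _ => (1:ℝ))) ℙ :=
    (integrable_const (1:ℝ)).indicator hs2
  rw [heq, integral_add i1 (i2.const_mul _), integral_const_mul,
    integral_indicator_const (1:ℝ) hs1, integral_indicator_const (1:ℝ) hs2]
  simp [smul_eq_mul, measureReal_def]

lemma integral_c_eq {Ω : Type*} [MeasureSpace Ω] [IsProbabilityMeasure (ℙ : Measure Ω)]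
    {Y Z Y' Z' : Ω → ℝ} (hY : Measurable Y) (hZ : Measurable Z)
    (hY' : Measurable Y') (hZ' : Measurable Z')
    (hind : IndepFun Y Z ℙ) (hind' : IndepFun Y' Z' ℙ)
    (hYY : Measure.map Y ℙ = Measure.map Y' ℙ) (hZZ : Measure.map Z ℙ = Measure.map Z' ℙ) :
    ∫ ω, c (Y ω - Z ω) = ∫ ω, c (Y' ω - Z' ω) := by
  have hmap : Measure.map (fun ω => (Y ω, Z ω)) ℙ = Measure.map (fun ω => (Y' ω, Z' ω)) ℙ := by
    rw [(indepFun_iff_map_prod_eq_prod_map_map hY.aemeasurable hZ.aemeasurable).mp hind,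
      (indepFun_iff_map_prod_eq_prod_map_map hY'.aemeasurable hZ'.aemeasurable).mp hind',
      hYY, hZZ]
  have hφ : Measurable (fun p : ℝ × ℝ => c (p.1 - p.2)) :=
    measurable_c.comp (measurable_fst.sub measurable_snd)
  calc ∫ ω, c (Y ω - Z ω)
      = ∫ p, c (p.1 - p.2) ∂(Measure.map (fun ω => (Y ω, Z ω)) ℙ) :=
        (integral_map (hY.prodMk hZ).aemeasurable hφ.aestronglyMeasurable).symm
    _ = ∫ p, c (p.1 - p.2) ∂(Measure.map (fun ω => (Y' ω, Z' ω)) ℙ) := by rw [hmap]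
    _ = ∫ ω, c (Y' ω - Z' ω) :=
        integral_map (hY'.prodMk hZ').aemeasurable hφ.aestronglyMeasurable

lemma second_moment_bound {Ω : Type*} [MeasureSpace Ω] [IsProbabilityMeasure (ℙ : Measure Ω)]
    (Z : ℕ → ℕ → Ω → ℝ) (hZm : ∀ k r, Measurable (Z k r))
    (hZ0 : ∀ k r ω, 0 ≤ Z k r ω) (hZ1 : ∀ k r ω, Z k r ω ≤ 1)
    {μ0 : ℝ} (hμ0 : 0 ≤ μ0) (hμ1 : μ0 ≤ 1)
    (hmean : ∀ k r, ∫ ω, Z k r ω = μ0)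
    (huncor : ∀ k r k' r', k ≠ k' → r ≠ r' → ∫ ω, Z k r ω * Z k' r' ω = μ0 * μ0)
    (nn m : ℕ) (hn : 0 < nn) (hm : 0 < m) :
    ∫ ω, ((1/((m:ℝ)*(nn:ℝ))) * ∑ k ∈ Finset.range nn, ∑ r ∈ Finset.range m, Z k r ω - μ0)^2
      ≤ 1/(nn:ℝ) + 1/(m:ℝ) := by
  have hnn : (0:ℝ) < nn := by exact_mod_cast hn
  have hmm : (0:ℝ) < m := by exact_mod_cast hm
  set P := Finset.range nn ×ˢ Finset.range m with hP
  set Y : ℕ → ℕ → Ω → ℝ := fun k r ω => Z k r ω - μ0 with hY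
  have hYb : ∀ k r ω, |Y k r ω| ≤ 1 := by
    intro k r ω
    have h0 := hZ0 k r ω
    have h1 := hZ1 k r ω
    rw [abs_le]
    constructor
    · show -1 ≤ Z k r ω - μ0; linarith
    · show Z k r ω - μ0 ≤ 1; linarith
  have hYm : ∀ k r, Measurable (Y k r) := fun k r => (hZm k r).sub_const _
  have hint : ∀ (p q : ℕ × ℕ), Integrable (fun ω => Y p.1 p.2 ω * Y q.1 q.2 ω) ℙ := by
    intro p q
    refine integrable_of_bdd ((hYm p.1 p.2).mul (hYm q.1 q.2)) (C := 1) fun ω => ?_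
    rw [abs_mul]
    have a1 := hYb p.1 p.2 ω
    have a2 := hYb q.1 q.2 ω
    have a3 := abs_nonneg (Y p.1 p.2 ω)
    have a4 := abs_nonneg (Y q.1 q.2 ω)
    nlinarith
  have hintZ : ∀ k r, Integrable (Z k r) ℙ := by
    intro k r
    refine integrable_of_bdd (hZm k r) (C := 1) fun ω => ?_
    rw [abs_le]
    exact ⟨by linarith [hZ0 k r ω], hZ1 k r ω⟩
  have hintZZ : ∀ (p q : ℕ × ℕ), Integrable (fun ω => Z p.1 p.2 ω * Z q.1 q.2 ω) ℙ := by
    intro p q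
    refine integrable_of_bdd ((hZm p.1 p.2).mul (hZm q.1 q.2)) (C := 1) fun ω => ?_
    rw [abs_mul, abs_of_nonneg (hZ0 p.1 p.2 ω), abs_of_nonneg (hZ0 q.1 q.2 ω)]
    nlinarith [hZ0 p.1 p.2 ω, hZ1 p.1 p.2 ω, hZ0 q.1 q.2 ω, hZ1 q.1 q.2 ω]
  have hsq : ∀ ω, ((1/((m:ℝ)*(nn:ℝ))) * ∑ k ∈ Finset.range nn, ∑ r ∈ Finset.range m, Z k r ω - μ0)^2
      = (1/((m:ℝ)*(nn:ℝ)))^2 * ∑ p ∈ P, ∑ q ∈ P, Y p.1 p.2 ω * Y q.1 q.2 ω := by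
    intro ω
    have h1 : ∑ p ∈ P, Y p.1 p.2 ω
        = (∑ k ∈ Finset.range nn, ∑ r ∈ Finset.range m, Z k r ω) - (nn * m) * μ0 := by
      rw [hP, Finset.sum_product]
      simp only [hY, Finset.sum_sub_distrib, Finset.sum_const, Finset.card_range, nsmul_eq_mul]
      ring
    have h2 : ∑ p ∈ P, ∑ q ∈ P, Y p.1 p.2 ω * Y q.1 q.2 ω = (∑ p ∈ P, Y p.1 p.2 ω)^2 := by
      rw [sq, Finset.sum_mul_sum]
    rw [h2, h1]
    field_simp
  calc ∫ ω, ((1/((m:ℝ)*(nn:ℝ))) * ∑ k ∈ Finset.range nn, ∑ r ∈ Finset.range m, Z k r ω - μ0)^2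
      = (1/((m:ℝ)*(nn:ℝ)))^2 * ∑ p ∈ P, ∑ q ∈ P, ∫ ω, Y p.1 p.2 ω * Y q.1 q.2 ω := by
        simp_rw [hsq]
        rw [integral_const_mul,
          integral_finset_sum _ (fun p _ => integrable_finset_sum _ (fun q _ => hint p q))]
        congr 1
        exact Finset.sum_congr rfl fun p _ => integral_finset_sum _ (fun q _ => hint p q)
    _ ≤ (1/((m:ℝ)*(nn:ℝ)))^2 * ∑ p ∈ P, ∑ q ∈ P,
          ((if p.1 = q.1 then (1:ℝ) else 0) + (if p.2 = q.2 then (1:ℝ) else 0)) := by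
        refine mul_le_mul_of_nonneg_left ?_ (by positivity)
        refine Finset.sum_le_sum fun p _ => Finset.sum_le_sum fun q _ => ?_
        have hle1 : ∫ ω, Y p.1 p.2 ω * Y q.1 q.2 ω ≤ 1 := by
          calc ∫ ω, Y p.1 p.2 ω * Y q.1 q.2 ω ≤ ∫ _ω : Ω, (1:ℝ) := by
                refine integral_mono (hint p q) (integrable_const 1) fun ω => ?_
                calc Y p.1 p.2 ω * Y q.1 q.2 ω ≤ |Y p.1 p.2 ω * Y q.1 q.2 ω| := le_abs_self _
                  _ ≤ 1 := by
                    rw [abs_mul]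
                    have a1 := hYb p.1 p.2 ω
                    have a2 := hYb q.1 q.2 ω
                    have a3 := abs_nonneg (Y p.1 p.2 ω)
                    have a4 := abs_nonneg (Y q.1 q.2 ω)
                    nlinarith
            _ = 1 := by simp
        by_cases h1 : p.1 = q.1
        · rw [if_pos h1]
          have : (0:ℝ) ≤ if p.2 = q.2 then (1:ℝ) else 0 := by split_ifs <;> norm_num
          linarith
        · by_cases h2 : p.2 = q.2
          · rw [if_neg h1, if_pos h2]; linarith
          · have hA : Integrable (fun ω => Z p.1 p.2 ω * Z q.1 q.2 ω - μ0 * Z q.1 q.2 ω) ℙ :=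
              (hintZZ p q).sub ((hintZ q.1 q.2).const_mul μ0)
            have hB : Integrable (fun ω => μ0 * Z p.1 p.2 ω - μ0 * μ0) ℙ :=
              ((hintZ p.1 p.2).const_mul μ0).sub (integrable_const _)
            have hexp : (fun ω => Y p.1 p.2 ω * Y q.1 q.2 ω)
                = fun ω => (Z p.1 p.2 ω * Z q.1 q.2 ω - μ0 * Z q.1 q.2 ω)
                  - (μ0 * Z p.1 p.2 ω - μ0 * μ0) := by
              funext ω
              show (Z p.1 p.2 ω - μ0) * (Z q.1 q.2 ω - μ0) = _
              ring
            have hz : ∫ ω, Y p.1 p.2 ω * Y q.1 q.2 ω = 0 := by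
              rw [hexp, integral_sub hA hB, integral_sub (hintZZ p q) ((hintZ q.1 q.2).const_mul μ0),
                integral_sub ((hintZ p.1 p.2).const_mul μ0) (integrable_const _),
                integral_const_mul, integral_const_mul, integral_const,
                huncor p.1 p.2 q.1 q.2 h1 h2, hmean, hmean]
              simp
            rw [hz, if_neg h1, if_neg h2]
            norm_num
    _ ≤ 1/(nn:ℝ) + 1/(m:ℝ) := by
        have inner1 : ∀ k ∈ Finset.range nn,
            ∑ q ∈ P, (if k = q.1 then (1:ℝ) else 0) = (m:ℝ) := by
          intro k hk
          rw [hP, Finset.sum_product]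
          have : ∀ k' : ℕ, ∑ _r' ∈ Finset.range m, (if k = k' then (1:ℝ) else 0)
              = (m:ℝ) * (if k = k' then 1 else 0) := by
            intro k'; rw [Finset.sum_const, Finset.card_range, nsmul_eq_mul]
          rw [Finset.sum_congr rfl fun k' _ => this k', ← Finset.mul_sum,
            Finset.sum_ite_eq, if_pos hk, mul_one]
        have inner2 : ∀ r ∈ Finset.range m,
            ∑ q ∈ P, (if r = q.2 then (1:ℝ) else 0) = (nn:ℝ) := by
          intro r hr
          rw [hP, Finset.sum_product]
          have : ∀ k' : ℕ, ∑ r' ∈ Finset.range m, (if r = r' then (1:ℝ) else 0) = 1 := by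
            intro k'; rw [Finset.sum_ite_eq, if_pos hr]
          rw [Finset.sum_congr rfl fun k' _ => this k', Finset.sum_const, Finset.card_range,
            nsmul_eq_mul, mul_one]
        have hc1 : ∑ p ∈ P, ∑ q ∈ P, (if p.1 = q.1 then (1:ℝ) else 0) = nn * m^2 := by
          nth_rewrite 1 [hP]
          rw [Finset.sum_product]
          have : ∀ k ∈ Finset.range nn, ∀ _r ∈ Finset.range m,
              ∑ q ∈ P, (if k = q.1 then (1:ℝ) else 0) = (m:ℝ) := fun k hk _ _ => inner1 k hk
          rw [Finset.sum_congr rfl fun k hk => Finset.sum_congr rfl fun r hr => this k hk r hr]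
          simp [Finset.sum_const, Finset.card_range, sq]; try ring
        have hc2 : ∑ p ∈ P, ∑ q ∈ P, (if p.2 = q.2 then (1:ℝ) else 0) = nn^2 * m := by
          nth_rewrite 1 [hP]
          rw [Finset.sum_product]
          have : ∀ k ∈ Finset.range nn, ∀ r ∈ Finset.range m,
              ∑ q ∈ P, (if r = q.2 then (1:ℝ) else 0) = (nn:ℝ) := fun k _ r hr => inner2 r hr
          rw [Finset.sum_congr rfl fun k hk => Finset.sum_congr rfl fun r hr => this k hk r hr]
          simp [Finset.sum_const, Finset.card_range, sq]; try ring
        simp only [Finset.sum_add_distrib]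
        rw [hc1, hc2,
          show (1/((m:ℝ)*(nn:ℝ)))^2 * ((nn:ℝ) * (m:ℝ)^2 + (nn:ℝ)^2 * (m:ℝ))
            = 1/(nn:ℝ) + 1/(m:ℝ) by field_simp]

lemma cheb {Ω : Type*} [MeasureSpace Ω] [IsProbabilityMeasure (ℙ : Measure Ω)]
    {S : Ω → ℝ} (hS : Measurable S) (hb : ∀ ω, |S ω| ≤ 1)
    {B ε : ℝ} (hε : 0 < ε) (hB : ∫ ω, (S ω)^2 ≤ B) :
    (ℙ {ω | ε < |S ω|}).toReal ≤ B / ε^2 := by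
  have hint : Integrable (fun ω => (S ω)^2) ℙ := by
    refine integrable_of_bdd (hS.pow_const 2) (C := 1) fun ω => ?_
    rw [abs_of_nonneg (sq_nonneg _), ← sq_abs]
    nlinarith [abs_nonneg (S ω), hb ω]
  have hsub : {ω | ε < |S ω|} ⊆ {ω | ε^2 ≤ (S ω)^2} := by
    intro ω h
    simp only [Set.mem_setOf_eq] at *
    rw [← sq_abs (S ω)]
    exact pow_le_pow_left₀ hε.le h.le 2
  have hm := mul_meas_ge_le_integral_of_nonneg (μ := ℙ) (f := fun ω => (S ω)^2)
    (ae_of_all _ fun ω => sq_nonneg _) hint (ε^2)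
  have hε2 : (0:ℝ) < ε^2 := by positivity
  have h1 : (ℙ {ω | ε < |S ω|}).toReal ≤ (ℙ {ω | ε^2 ≤ (S ω)^2}).toReal :=
    ENNReal.toReal_mono (measure_ne_top _ _) (measure_mono hsub)
  have h2 : (ℙ {ω | ε^2 ≤ (S ω)^2}).toReal ≤ (∫ ω, (S ω)^2) / ε^2 := by
    rw [le_div_iff₀ hε2]
    rw [measureReal_def] at hm
    linarith
  calc (ℙ {ω | ε < |S ω|}).toReal ≤ (∫ ω, (S ω)^2) / ε^2 := h1.trans h2
    _ ≤ B / ε^2 := by gcongr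

/-- Consistency of the plug-in estimator `p̂_i = ∫ Ĝ dF̂_i`: for i.i.d. observations
within each of `a` independent groups with sample sizes tending to infinity,
`p̂_i → p_i = (1/a) ∑_ℓ w_{ℓi}` in probability. -/
theorem stmt17 {Ω : Type*} [MeasureSpace Ω] [IsProbabilityMeasure (ℙ : Measure Ω)]
    (a : ℕ) (ha : 0 < a)
    (X : Fin a → ℕ → Ω → ℝ)
    (hXm : ∀ i k, Measurable (X i k))
    (hiid : ∀ i k, Measure.map (X i k) ℙ = Measure.map (X i 0) ℙ)
    (hindep : iIndepFun (fun q : Fin a × ℕ => X q.1 q.2) ℙ)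
    (n : ℕ → Fin a → ℕ) (hn0 : ∀ N i, 0 < n N i)
    (hn : ∀ i, Tendsto (fun N => n N i) atTop atTop)
    (w : Fin a → Fin a → ℝ)
    (hw : ∀ ℓ i, w ℓ i = if ℓ = i then 1/2 else
      (ℙ {ω | X ℓ 0 ω < X i 0 ω}).toReal + (1/2) * (ℙ {ω | X ℓ 0 ω = X i 0 ω}).toReal)
    (p : Fin a → ℝ) (hp : ∀ i, p i = (1/(a:ℝ)) * ∑ ℓ, w ℓ i)
    (phat : ℕ → Fin a → Ω → ℝ)
    (hphat : ∀ N i ω, phat N i ω = (1/(a:ℝ)) * ∑ ℓ, (1/((n N ℓ : ℝ) * (n N i : ℝ))) *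
      ∑ k ∈ Finset.range (n N i), ∑ r ∈ Finset.range (n N ℓ), c (X i k ω - X ℓ r ω)) :
    ∀ i, ∀ ε > 0, Tendsto (fun N => (ℙ {ω | ε < |phat N i ω - p i|}).toReal)
      atTop (nhds 0) := by
  intro i ε hε
  have hφ : Measurable (fun pr : ℝ × ℝ => c (pr.1 - pr.2)) :=
    measurable_c.comp (measurable_fst.sub measurable_snd)
  set W : ℕ → Fin a → Ω → ℝ := fun N ℓ ω => (1/((n N ℓ : ℝ) * (n N i : ℝ))) *
      ∑ k ∈ Finset.range (n N i), ∑ r ∈ Finset.range (n N ℓ), c (X i k ω - X ℓ r ω) with hWdef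
  have hnNi : ∀ N ℓ, (0:ℝ) < (n N ℓ : ℝ) := fun N ℓ => by exact_mod_cast hn0 N ℓ
  -- difference decomposition
  have hdiff : ∀ N ω, phat N i ω - p i = (1/(a:ℝ)) * ∑ ℓ, (W N ℓ ω - w ℓ i) := by
    intro N ω
    rw [hphat N i ω, hp i, ← mul_sub, ← Finset.sum_sub_distrib]
  -- measurability of W
  have hWm : ∀ N ℓ, Measurable (W N ℓ) := by
    intro N ℓ
    exact (Finset.measurable_sum _ fun k _ => Finset.measurable_sum _ fun r _ =>
      measurable_c.comp ((hXm i k).sub (hXm ℓ r))).const_mul _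
  -- bounds on W
  have hW0 : ∀ N ℓ ω, 0 ≤ W N ℓ ω := by
    intro N ℓ ω
    refine mul_nonneg (by positivity) ?_
    exact Finset.sum_nonneg fun k _ => Finset.sum_nonneg fun r _ => c_nonneg _
  have hW1 : ∀ N ℓ ω, W N ℓ ω ≤ 1 := by
    intro N ℓ ω
    have hsum : ∑ k ∈ Finset.range (n N i), ∑ r ∈ Finset.range (n N ℓ), c (X i k ω - X ℓ r ω)
        ≤ (n N i : ℝ) * (n N ℓ : ℝ) := by
      calc ∑ k ∈ Finset.range (n N i), ∑ r ∈ Finset.range (n N ℓ), c (X i k ω - X ℓ r ω)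
          ≤ ∑ _k ∈ Finset.range (n N i), (n N ℓ : ℝ) := by
            refine Finset.sum_le_sum fun k _ => ?_
            calc ∑ r ∈ Finset.range (n N ℓ), c (X i k ω - X ℓ r ω)
                ≤ ∑ _r ∈ Finset.range (n N ℓ), (1:ℝ) := Finset.sum_le_sum fun r _ => c_le_one _
              _ = (n N ℓ : ℝ) := by simp
        _ = (n N i : ℝ) * (n N ℓ : ℝ) := by simp
    have h1 : W N ℓ ω ≤ (1/((n N ℓ : ℝ) * (n N i : ℝ))) * ((n N i : ℝ) * (n N ℓ : ℝ)) := by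
      refine mul_le_mul_of_nonneg_left hsum (by positivity)
    calc W N ℓ ω ≤ (1/((n N ℓ : ℝ) * (n N i : ℝ))) * ((n N i : ℝ) * (n N ℓ : ℝ)) := h1
      _ = 1 := by
        have ha1 := (hnNi N i).ne'
        have ha2 := (hnNi N ℓ).ne'
        field_simp
  -- w as an integral, and bounds
  have hwint : ∀ ℓ, ℓ ≠ i → w ℓ i = ∫ ω, c (X i 0 ω - X ℓ 0 ω) := by
    intro ℓ hℓ
    rw [hw, if_neg hℓ, integral_c (hXm i 0) (hXm ℓ 0)]
  have hwb : ∀ ℓ, 0 ≤ w ℓ i ∧ w ℓ i ≤ 1 := by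
    intro ℓ
    by_cases hℓ : ℓ = i
    · rw [hw, if_pos hℓ]; norm_num
    · rw [hwint ℓ hℓ]
      constructor
      · exact integral_nonneg fun ω => c_nonneg _
      · have hintc : Integrable (fun ω => c (X i 0 ω - X ℓ 0 ω)) ℙ :=
          integrable_of_bdd (measurable_c.comp ((hXm i 0).sub (hXm ℓ 0))) (C := 1)
            fun ω => abs_le.mpr ⟨by linarith [c_nonneg (X i 0 ω - X ℓ 0 ω)], c_le_one _⟩
        calc ∫ ω, c (X i 0 ω - X ℓ 0 ω) ≤ ∫ _ω : Ω, (1:ℝ) :=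
              integral_mono hintc (integrable_const 1) fun ω => c_le_one _
          _ = 1 := by simp
  -- mean
  have hmean : ∀ ℓ, ℓ ≠ i → ∀ k r, ∫ ω, c (X i k ω - X ℓ r ω) = w ℓ i := by
    intro ℓ hℓ k r
    rw [hwint ℓ hℓ]
    have hne : ∀ (k' r' : ℕ), ((i, k') : Fin a × ℕ) ≠ (ℓ, r') := by
      intro k' r' h
      exact hℓ (congrArg Prod.fst h).symm
    exact integral_c_eq (hXm i k) (hXm ℓ r) (hXm i 0) (hXm ℓ 0)
      (hindep.indepFun (hne k r)) (hindep.indepFun (hne 0 0)) (hiid i k) (hiid ℓ r)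
  -- uncorrelated
  have huncor : ∀ ℓ, ℓ ≠ i → ∀ k r k' r', k ≠ k' → r ≠ r' →
      ∫ ω, c (X i k ω - X ℓ r ω) * c (X i k' ω - X ℓ r' ω) = w ℓ i * w ℓ i := by
    intro ℓ hℓ k r k' r' hk hr
    have hiℓ : i ≠ ℓ := fun h => hℓ h.symm
    have hpair := hindep.indepFun_prodMk_prodMk (fun q => hXm q.1 q.2)
      (i, k) (ℓ, r) (i, k') (ℓ, r')
      (by simp [Prod.ext_iff, hk]) (by simp [Prod.ext_iff, hiℓ])
      (by simp [Prod.ext_iff]; intro h; exact absurd h.symm hiℓ) (by simp [Prod.ext_iff, hr])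
    have hZZ : IndepFun (fun ω => c (X i k ω - X ℓ r ω))
        (fun ω => c (X i k' ω - X ℓ r' ω)) ℙ := hpair.comp hφ hφ
    have hint1 : Integrable (fun ω => c (X i k ω - X ℓ r ω)) ℙ :=
      integrable_of_bdd (measurable_c.comp ((hXm i k).sub (hXm ℓ r))) (C := 1)
        fun ω => abs_le.mpr ⟨by linarith [c_nonneg (X i k ω - X ℓ r ω)], c_le_one _⟩
    have hint2 : Integrable (fun ω => c (X i k' ω - X ℓ r' ω)) ℙ :=
      integrable_of_bdd (measurable_c.comp ((hXm i k').sub (hXm ℓ r'))) (C := 1)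
        fun ω => abs_le.mpr ⟨by linarith [c_nonneg (X i k' ω - X ℓ r' ω)], c_le_one _⟩
    have := hZZ.integral_mul_eq_mul_integral hint1.aestronglyMeasurable hint2.aestronglyMeasurable
    simp only [Pi.mul_apply] at this
    rw [show (fun ω => c (X i k ω - X ℓ r ω) * c (X i k' ω - X ℓ r' ω))
        = (fun ω => c (X i k ω - X ℓ r ω)) * (fun ω => c (X i k' ω - X ℓ r' ω)) from rfl]
    exact this.trans (by rw [hmean ℓ hℓ k r, hmean ℓ hℓ k' r'])
  -- key per-group convergence
  have key : ∀ ℓ, Tendsto (fun N => (ℙ {ω | ε < |W N ℓ ω - w ℓ i|}).toReal) atTop (nhds 0) := by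
    intro ℓ
    by_cases hℓ : ℓ = i
    · subst hℓ
      have hWval : ∀ N ω, W N ℓ ω = 1/2 := by
        intro N ω
        rw [hWdef]
        simp only
        rw [diag_sum (fun k => X ℓ k ω) (n N ℓ)]
        have := hnNi N ℓ
        field_simp
      have hz : ∀ N, (ℙ {ω | ε < |W N ℓ ω - w ℓ ℓ|}) = 0 := by
        intro N
        have : {ω | ε < |W N ℓ ω - w ℓ ℓ|} = ∅ := by
          ext ω
          simp only [Set.mem_setOf_eq, Set.mem_empty_iff_false, iff_false, not_lt]
          rw [hWval N ω, hw, if_pos rfl]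
          simp [hε.le]
        rw [this, measure_empty]
      simp only [hz]
      simp
    · have hbound : ∀ N, (ℙ {ω | ε < |W N ℓ ω - w ℓ i|}).toReal
          ≤ (1/(n N i : ℝ) + 1/(n N ℓ : ℝ))/ε^2 := by
        intro N
        refine cheb ((hWm N ℓ).sub_const _) ?_ hε ?_
        · intro ω
          refine abs_le.mpr ⟨?_, ?_⟩
          · have := hW0 N ℓ ω; have := (hwb ℓ).2; linarith
          · have := hW1 N ℓ ω; have := (hwb ℓ).1; linarith
        · exact second_moment_bound (fun k r ω => c (X i k ω - X ℓ r ω))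
            (fun k r => measurable_c.comp ((hXm i k).sub (hXm ℓ r)))
            (fun k r ω => c_nonneg _) (fun k r ω => c_le_one _)
            (hwb ℓ).1 (hwb ℓ).2 (hmean ℓ hℓ) (fun k r k' r' hk hr => huncor ℓ hℓ k r k' r' hk hr)
            (n N i) (n N ℓ) (hn0 N i) (hn0 N ℓ)
      refine squeeze_zero (fun N => ENNReal.toReal_nonneg) hbound ?_
      have h1 : Tendsto (fun N => 1/(n N i : ℝ)) atTop (nhds 0) :=
        tendsto_one_div_atTop_nhds_zero_nat.comp (hn i)
      have h2 : Tendsto (fun N => 1/(n N ℓ : ℝ)) atTop (nhds 0) :=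
        tendsto_one_div_atTop_nhds_zero_nat.comp (hn ℓ)
      have := (h1.add h2).div_const (ε^2)
      simpa using this
  -- assembly
  have hsub : ∀ N, {ω | ε < |phat N i ω - p i|}
      ⊆ ⋃ ℓ ∈ (Finset.univ : Finset (Fin a)), {ω | ε < |W N ℓ ω - w ℓ i|} := by
    intro N ω hω
    simp only [Set.mem_setOf_eq] at hω
    by_contra hc
    simp only [Set.mem_iUnion, Set.mem_setOf_eq, not_exists, not_lt] at hc
    have hbig : |phat N i ω - p i| ≤ ε := by
      rw [hdiff N ω, abs_mul]
      have habs : |∑ ℓ, (W N ℓ ω - w ℓ i)| ≤ (a:ℝ) * ε := by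
        calc |∑ ℓ, (W N ℓ ω - w ℓ i)| ≤ ∑ ℓ, |W N ℓ ω - w ℓ i| :=
              Finset.abs_sum_le_sum_abs _ _
          _ ≤ ∑ _ℓ : Fin a, ε := Finset.sum_le_sum fun ℓ _ => hc ℓ (Finset.mem_univ ℓ)
          _ = (a:ℝ) * ε := by simp [mul_comm]
      have haa : (0:ℝ) < a := by exact_mod_cast ha
      calc |1/(a:ℝ)| * |∑ ℓ, (W N ℓ ω - w ℓ i)| ≤ (1/(a:ℝ)) * ((a:ℝ) * ε) := by
            rw [abs_of_nonneg (by positivity : (0:ℝ) ≤ 1/(a:ℝ))]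
            exact mul_le_mul_of_nonneg_left habs (by positivity)
        _ = ε := by field_simp
    exact absurd hω (not_lt.mpr hbig)
  have hle : ∀ N, (ℙ {ω | ε < |phat N i ω - p i|}).toReal
      ≤ ∑ ℓ, (ℙ {ω | ε < |W N ℓ ω - w ℓ i|}).toReal := by
    intro N
    calc (ℙ {ω | ε < |phat N i ω - p i|}).toReal
        ≤ (∑ ℓ, ℙ {ω | ε < |W N ℓ ω - w ℓ i|}).toReal := by
          refine ENNReal.toReal_mono (by
            refine (ENNReal.sum_lt_top.mpr fun ℓ _ => measure_lt_top _ _).ne) ?_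
          exact (measure_mono (hsub N)).trans (measure_biUnion_finset_le _ _)
      _ = ∑ ℓ, (ℙ {ω | ε < |W N ℓ ω - w ℓ i|}).toReal :=
          ENNReal.toReal_sum fun ℓ _ => measure_ne_top _ _
  refine squeeze_zero (fun N => ENNReal.toReal_nonneg) hle ?_
  have := tendsto_finset_sum (Finset.univ : Finset (Fin a)) (fun ℓ _ => key ℓ)
  simpa using this
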